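/- Let p be any probability distribution on [n] partitioned into intervals I₁,...,I_b, and let p̄ be the flattening of p over these intervals (p̄_i = p(I_j)/|I_j| for i ∈ I_j). Suppose q is the add-1 (Laplace) estimator built from m i.i.d. samples: for i ∈ I_j, q_i = (m_j + 1)/(|I_j|(m + b)), where m_j is the number of samples falling in I_j. Then E[χ²(p,q)] ≤ ((m+b)/(m+1))·χ²(p, p̄) + b/(m+1). -/

import Mathlib

open Finset

private lemma key_ident (m : ℕ) (t : ℝ) (ht : 0 < t) (ht1 : t ≤ 1) :
    ∑ ℓ ∈ Finset.range (m + 1), (m.choose ℓ : ℝ) * t ^ ℓ * (1 - t) ^ (m - ℓ) / (ℓ + 1)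
      ≤ 1 / (((m : ℝ) + 1) * t) := by
  rw [le_div_iff₀ (by positivity), Finset.sum_mul]
  have h1 : ∀ ℓ ∈ Finset.range (m + 1),
      ((m.choose ℓ : ℝ) * t ^ ℓ * (1 - t) ^ (m - ℓ) / (ℓ + 1)) * (((m : ℝ) + 1) * t)
        = t ^ (ℓ + 1) * (1 - t) ^ (m + 1 - (ℓ + 1)) * (((m + 1).choose (ℓ + 1) : ℝ)) := by
    intro ℓ hℓ
    have hc : ((m : ℝ) + 1) * (m.choose ℓ : ℝ) = ((m + 1).choose (ℓ + 1) : ℝ) * ((ℓ : ℝ) + 1) := by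
      exact_mod_cast congrArg (Nat.cast : ℕ → ℝ) (Nat.add_one_mul_choose_eq m ℓ)
    have hl1 : ((ℓ : ℝ) + 1) ≠ 0 := by positivity
    simp only [Nat.succ_sub_succ]
    rw [div_mul_eq_mul_div, div_eq_iff hl1]
    linear_combination (t ^ (ℓ + 1) * (1 - t) ^ (m - ℓ)) * hc
  rw [Finset.sum_congr rfl h1]
  have hbin : ∑ k ∈ Finset.range (m + 2),
      t ^ k * (1 - t) ^ (m + 1 - k) * (((m + 1).choose k : ℝ)) = 1 := by
    have h := add_pow t (1 - t) (m + 1)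
    have h2 : t + (1 - t) = 1 := by ring
    rw [h2, one_pow] at h
    exact h.symm
  have hsplit := Finset.sum_range_succ'
    (fun k => t ^ k * (1 - t) ^ (m + 1 - k) * (((m + 1).choose k : ℝ))) (m + 1)
  rw [hbin] at hsplit
  simp only [pow_zero, Nat.sub_zero, Nat.choose_zero_right, Nat.cast_one, one_mul,
    mul_one] at hsplit
  nlinarith [pow_nonneg (by linarith : (0:ℝ) ≤ 1 - t) (m + 1), hsplit]

private lemma inner_bound (m b : ℕ) (P S kr : ℝ) (hP : 0 < P) (hP1 : P ≤ 1)
    (hS : 0 ≤ S) (hk : 0 ≤ kr) :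
    ∑ ℓ ∈ Finset.range (m + 1),
        (m.choose ℓ : ℝ) * P ^ ℓ * (1 - P) ^ (m - ℓ) * S * (kr * ((m : ℝ) + (b : ℝ))) / (ℓ + 1)
      ≤ (((m : ℝ) + (b : ℝ)) / ((m : ℝ) + 1)) * (kr * S / P) := by
  have h1 : ∑ ℓ ∈ Finset.range (m + 1),
      (m.choose ℓ : ℝ) * P ^ ℓ * (1 - P) ^ (m - ℓ) * S * (kr * ((m : ℝ) + (b : ℝ))) / (ℓ + 1)
      = (∑ ℓ ∈ Finset.range (m + 1),
          (m.choose ℓ : ℝ) * P ^ ℓ * (1 - P) ^ (m - ℓ) / (ℓ + 1)) * (S * (kr * ((m : ℝ) + (b : ℝ)))) := by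
    rw [Finset.sum_mul]
    exact Finset.sum_congr rfl fun ℓ _ => by ring
  rw [h1]
  have hb0 : (0:ℝ) ≤ (m : ℝ) + (b : ℝ) := by positivity
  have h2 : (∑ ℓ ∈ Finset.range (m + 1),
      (m.choose ℓ : ℝ) * P ^ ℓ * (1 - P) ^ (m - ℓ) / (ℓ + 1)) * (S * (kr * ((m : ℝ) + (b : ℝ))))
      ≤ (1 / (((m : ℝ) + 1) * P)) * (S * (kr * ((m : ℝ) + (b : ℝ)))) :=
    mul_le_mul_of_nonneg_right (key_ident m P hP hP1) (by positivity)
  refine h2.trans_eq ?_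
  have hm1 : ((m : ℝ) + 1) ≠ 0 := by positivity
  field_simp

private lemma chisq_eq (s : Finset ℕ) (p : ℕ → ℝ) (hc : 0 < ((s.card : ℕ) : ℝ))
    (hP : 0 < ∑ i ∈ s, p i) :
    ∑ i ∈ s, (p i - (∑ i' ∈ s, p i') / (s.card : ℝ)) ^ 2 / ((∑ i' ∈ s, p i') / (s.card : ℝ))
      = (s.card : ℝ) * (∑ i ∈ s, p i ^ 2) / (∑ i ∈ s, p i) - ∑ i ∈ s, p i := by
  have hPne : (∑ i ∈ s, p i) ≠ 0 := ne_of_gt hP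
  have hcne : ((s.card : ℕ) : ℝ) ≠ 0 := ne_of_gt hc
  rw [← Finset.sum_div]
  have hexp : ∑ i ∈ s, (p i - (∑ i' ∈ s, p i') / (s.card : ℝ)) ^ 2
      = (∑ i ∈ s, p i ^ 2) - (2 * ((∑ i' ∈ s, p i') / (s.card : ℝ))) * (∑ i ∈ s, p i)
        + (s.card : ℝ) * ((∑ i' ∈ s, p i') / (s.card : ℝ)) ^ 2 := by
    have h : ∀ i ∈ s, (p i - (∑ i' ∈ s, p i') / (s.card : ℝ)) ^ 2
        = p i ^ 2 - (2 * ((∑ i' ∈ s, p i') / (s.card : ℝ))) * p i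
          + ((∑ i' ∈ s, p i') / (s.card : ℝ)) ^ 2 := fun i _ => by ring
    rw [Finset.sum_congr rfl h, Finset.sum_add_distrib, Finset.sum_sub_distrib,
      ← Finset.mul_sum, Finset.sum_const, nsmul_eq_mul]
  rw [hexp]
  field_simp
  ring

private lemma tele (F : ℕ → ℕ) (hF : Monotone F) (g : ℕ → ℝ) (b : ℕ) :
    ∑ j ∈ Finset.range b, ∑ i ∈ Finset.Ico (F j) (F (j + 1)), g i
      = ∑ i ∈ Finset.Ico (F 0) (F b), g i := by
  induction b with
  | zero => simp
  | succ b ih =>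
    rw [Finset.sum_range_succ, ih,
      Finset.sum_Ico_consecutive _ (hF (Nat.zero_le b)) (hF (Nat.le_succ b))]

/-- Expected chi-squared error of the add-1 (Laplace) estimator over a partition of `[n]`
into `b` intervals. -/
theorem add_one_estimator_chi_sq (n b m : ℕ) (hb : 0 < b) (p : ℕ → ℝ)
    (e : Fin (b + 1) → ℕ) (he : StrictMono e) (he0 : e 0 = 0) (heb : e (Fin.last b) = n)
    (hp0 : ∀ i, 0 ≤ p i) (hp1 : ∑ i ∈ Finset.range n, p i = 1)
    (hP : ∀ j : Fin b, 0 < ∑ i ∈ Finset.Ico (e j.castSucc) (e j.succ), p i) :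
    (∑ j : Fin b, ∑ ℓ ∈ Finset.range (m + 1),
        (m.choose ℓ : ℝ) * (∑ i ∈ Finset.Ico (e j.castSucc) (e j.succ), p i) ^ ℓ *
          (1 - ∑ i ∈ Finset.Ico (e j.castSucc) (e j.succ), p i) ^ (m - ℓ) *
          (∑ i ∈ Finset.Ico (e j.castSucc) (e j.succ), p i ^ 2) *
          (((Finset.Ico (e j.castSucc) (e j.succ)).card : ℝ) * (m + b)) / (ℓ + 1)) - 1 ≤
      ((m + b : ℝ) / (m + 1)) *
          (∑ j : Fin b, ∑ i ∈ Finset.Ico (e j.castSucc) (e j.succ),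
            (p i - (∑ i' ∈ Finset.Ico (e j.castSucc) (e j.succ), p i') /
                ((Finset.Ico (e j.castSucc) (e j.succ)).card : ℝ)) ^ 2 /
              ((∑ i' ∈ Finset.Ico (e j.castSucc) (e j.succ), p i') /
                ((Finset.Ico (e j.castSucc) (e j.succ)).card : ℝ))) +
        (b : ℝ) / (m + 1) := by
  -- endpoints as a monotone function on ℕ
  set F : ℕ → ℕ := fun t => e ⟨min t b, by omega⟩ with hF
  have hFmono : Monotone F := by
    intro a c hac
    exact (he.monotone (by simp [Fin.le_def]; omega))
  have hFcast : ∀ j : Fin b, F (j : ℕ) = e j.castSucc := by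
    intro j
    apply congrArg e
    apply Fin.ext
    simp [hF, Nat.min_eq_left (le_of_lt j.isLt)]
  have hFsucc : ∀ j : Fin b, F ((j : ℕ) + 1) = e j.succ := by
    intro j
    apply congrArg e
    apply Fin.ext
    have : (j : ℕ) + 1 ≤ b := j.isLt
    simp [hF, Nat.min_eq_left this]
  have hF0 : F 0 = 0 := by
    have : (⟨min 0 b, by omega⟩ : Fin (b + 1)) = 0 := by
      apply Fin.ext; simp
    rw [hF]; simp only [this]; exact he0
  have hFb : F b = n := by
    have : (⟨min b b, by omega⟩ : Fin (b + 1)) = Fin.last b := by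
      apply Fin.ext; simp
    rw [hF]; simp only [this]; exact heb
  -- partition of the total sum
  have hall : ∀ g : ℕ → ℝ,
      ∑ j : Fin b, ∑ i ∈ Finset.Ico (e j.castSucc) (e j.succ), g i
        = ∑ i ∈ Finset.range n, g i := by
    intro g
    have h1 : ∀ j : Fin b, ∑ i ∈ Finset.Ico (e j.castSucc) (e j.succ), g i
        = ∑ i ∈ Finset.Ico (F (j : ℕ)) (F ((j : ℕ) + 1)), g i := by
      intro j; rw [hFcast j, hFsucc j]
    rw [Finset.sum_congr rfl (fun j _ => h1 j),
      Fin.sum_univ_eq_sum_range (fun t => ∑ i ∈ Finset.Ico (F t) (F (t + 1)), g i) b,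
      tele F hFmono g b, hF0, hFb]
    rw [Finset.range_eq_Ico]
  have sumP : ∑ j : Fin b, ∑ i ∈ Finset.Ico (e j.castSucc) (e j.succ), p i = 1 :=
    (hall p).trans hp1
  have hPle1 : ∀ j : Fin b, ∑ i ∈ Finset.Ico (e j.castSucc) (e j.succ), p i ≤ 1 := by
    intro j
    rw [← sumP]
    exact Finset.single_le_sum
      (f := fun j : Fin b => ∑ i ∈ Finset.Ico (e j.castSucc) (e j.succ), p i)
      (fun j _ => le_of_lt (hP j)) (Finset.mem_univ j)
  have hcard : ∀ j : Fin b, 0 < (((Finset.Ico (e j.castSucc) (e j.succ)).card : ℕ) : ℝ) := by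
    intro j
    have h := he (Fin.castSucc_lt_succ (i := j))
    rw [Nat.card_Ico]
    have : 0 < e j.succ - e j.castSucc := by omega
    exact_mod_cast this
  have hS : ∀ j : Fin b, 0 ≤ ∑ i ∈ Finset.Ico (e j.castSucc) (e j.succ), p i ^ 2 :=
    fun j => Finset.sum_nonneg fun i _ => sq_nonneg _
  -- bound the inner (expectation) sums
  have hb1 : ∑ j : Fin b, ∑ ℓ ∈ Finset.range (m + 1),
        (m.choose ℓ : ℝ) * (∑ i ∈ Finset.Ico (e j.castSucc) (e j.succ), p i) ^ ℓ *
          (1 - ∑ i ∈ Finset.Ico (e j.castSucc) (e j.succ), p i) ^ (m - ℓ) *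
          (∑ i ∈ Finset.Ico (e j.castSucc) (e j.succ), p i ^ 2) *
          (((Finset.Ico (e j.castSucc) (e j.succ)).card : ℝ) * (m + b)) / (ℓ + 1)
      ≤ ∑ j : Fin b, (((m : ℝ) + (b : ℝ)) / ((m : ℝ) + 1)) *
          (((Finset.Ico (e j.castSucc) (e j.succ)).card : ℝ) *
            (∑ i ∈ Finset.Ico (e j.castSucc) (e j.succ), p i ^ 2) /
            (∑ i ∈ Finset.Ico (e j.castSucc) (e j.succ), p i)) := by
    apply Finset.sum_le_sum
    intro j _
    exact inner_bound m b _ _ _ (hP j) (hPle1 j) (hS j) (le_of_lt (hcard j))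
  -- rewrite the chi-squared sums
  have hchi : ∑ j : Fin b, ∑ i ∈ Finset.Ico (e j.castSucc) (e j.succ),
        (p i - (∑ i' ∈ Finset.Ico (e j.castSucc) (e j.succ), p i') /
            ((Finset.Ico (e j.castSucc) (e j.succ)).card : ℝ)) ^ 2 /
          ((∑ i' ∈ Finset.Ico (e j.castSucc) (e j.succ), p i') /
            ((Finset.Ico (e j.castSucc) (e j.succ)).card : ℝ))
      = ∑ j : Fin b, (((Finset.Ico (e j.castSucc) (e j.succ)).card : ℝ) *
          (∑ i ∈ Finset.Ico (e j.castSucc) (e j.succ), p i ^ 2) /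
          (∑ i ∈ Finset.Ico (e j.castSucc) (e j.succ), p i)
        - ∑ i ∈ Finset.Ico (e j.castSucc) (e j.succ), p i) :=
    Finset.sum_congr rfl fun j _ => chisq_eq _ p (hcard j) (hP j)
  rw [hchi, Finset.sum_sub_distrib, sumP, ← Finset.mul_sum] at *
  have hmm : ((m : ℝ) + (b : ℝ)) / ((m : ℝ) + 1) - (b : ℝ) / ((m : ℝ) + 1) ≤ 1 := by
    rw [div_sub_div_same]
    have : ((m : ℝ) + (b : ℝ)) - (b : ℝ) = (m : ℝ) := by ring
    rw [this]
    rw [div_le_one (by positivity)]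
    linarith
  push_cast
  push_cast at hb1
  nlinarith [hb1, hmm]
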